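/- Let w ∈ ℝⁿ with ∑ᵢ wᵢ = 1 and let v* be the Euclidean projection of w onto the probability simplex Δₙ. Then v* minimizes the ℓ₁ objective ‖v − w‖₁ over v ∈ Δₙ, with minimal value ‖w‖₁ − 1. Moreover, if w ≥ 0 then the minimum is 0 and v* = w. -/
import Mathlib


/-- The Euclidean projection `v` of `w` (with `∑ w = 1`) onto the probability simplex
minimizes the ℓ₁ objective `‖u - w‖₁` over the simplex, with minimal value
`‖w‖₁ - 1`; moreover if `w ≥ 0` then the minimum is `0` and `v = w`. -/
theorem stmt19 (n : ℕ) (w v : Fin n → ℝ) (hw : ∑ i, w i = 1)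
    (hv0 : ∀ i, 0 ≤ v i) (hv1 : ∑ i, v i = 1)
    (hmin : ∀ u : Fin n → ℝ, (∀ i, 0 ≤ u i) → ∑ i, u i = 1 →
      ∑ i, (v i - w i) ^ 2 ≤ ∑ i, (u i - w i) ^ 2) :
    (∀ u : Fin n → ℝ, (∀ i, 0 ≤ u i) → ∑ i, u i = 1 →
      ∑ i, |v i - w i| ≤ ∑ i, |u i - w i|) ∧
    (∑ i, |v i - w i| = ∑ i, |w i| - 1) ∧
    ((∀ i, 0 ≤ w i) → (∑ i, |v i - w i| = 0 ∧ v = w)) := by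
  -- Step 1: perturbation lemma
  have L : ∀ i j : Fin n, i ≠ j → 0 < v i → v i - w i ≤ v j - w j := by
    intro i j hij hvi
    by_contra h
    push_neg at h
    set D : ℝ := (v j - w j) - (v i - w i) with hDdef
    have hD : D < 0 := by simp only [hDdef]; linarith
    set ε : ℝ := min (v i) (-D / 2) with hεdef
    have hε0 : 0 < ε := lt_min hvi (by linarith)
    have hεvi : ε ≤ v i := min_le_left _ _
    have hεD : ε ≤ -D / 2 := min_le_right _ _
    set u : Fin n → ℝ :=
      fun k => v k + ((if k = j then ε else 0) - (if k = i then ε else 0)) with hu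
    have hu0 : ∀ k, 0 ≤ u k := by
      intro k
      simp only [hu]
      by_cases hkj : k = j <;> by_cases hki : k = i
      · exact absurd (hki.symm.trans hkj) hij
      · simp [hkj, Ne.symm hij]; linarith [hv0 j]
      · simp [hki, hij]; linarith
      · simp [hkj, hki]; linarith [hv0 k]
    have hsum : ∑ k, u k = 1 := by
      simp only [hu]
      rw [Finset.sum_add_distrib, Finset.sum_sub_distrib]
      simp [Finset.sum_ite_eq', hv1]
    have hquad := hmin u hu0 hsum
    have hexp : ∀ k, (u k - w k) ^ 2 =
        (v k - w k) ^ 2 + ((if k = j then 2 * (v k - w k) * ε else 0)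
          - (if k = i then 2 * (v k - w k) * ε else 0))
        + ((if k = j then ε ^ 2 else 0) + (if k = i then ε ^ 2 else 0)) := by
      intro k
      by_cases hkj : k = j <;> by_cases hki : k = i
      · exact absurd (hki.symm.trans hkj) hij
      · simp [hu, hkj, Ne.symm hij]; ring
      · simp [hu, hki, hij]; ring
      · simp [hu, hkj, hki]
    have hrw : ∑ k, (u k - w k) ^ 2 =
        ∑ k, (v k - w k) ^ 2 + (2 * (v j - w j) * ε - 2 * (v i - w i) * ε)
          + (ε ^ 2 + ε ^ 2) := by
      rw [Finset.sum_congr rfl (fun k _ => hexp k)]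
      rw [Finset.sum_add_distrib, Finset.sum_add_distrib, Finset.sum_sub_distrib,
        Finset.sum_add_distrib]
      simp [Finset.sum_ite_eq']
    rw [hrw] at hquad
    have : 0 ≤ 2 * ε * (D + ε) := by simp only [hDdef] at *; nlinarith
    nlinarith
  -- Step 2: if v i > 0 then v i ≤ w i
  have key : ∀ i, 0 < v i → v i ≤ w i := by
    intro i hvi
    by_contra h
    push_neg at h
    have hall : ∀ j, v i - w i ≤ v j - w j := by
      intro j
      by_cases hj : i = j
      · subst hj; exact le_refl _
      · exact L i j hj hvi
    have hsum0 : ∑ j, (v j - w j) = 0 := by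
      rw [Finset.sum_sub_distrib, hv1, hw]; ring
    have hcard : (Finset.univ : Finset (Fin n)).card • (v i - w i)
        ≤ ∑ j, (v j - w j) :=
      Finset.card_nsmul_le_sum _ _ _ (fun j _ => hall j)
    have hn : 0 < n := i.pos
    rw [hsum0, Finset.card_univ, Fintype.card_fin, nsmul_eq_mul] at hcard
    have hn' : (1 : ℝ) ≤ (n : ℝ) := by exact_mod_cast hn
    nlinarith
  -- Step 3: pointwise |v i - w i| = |w i| - v i
  have habs : ∀ i, |v i - w i| = |w i| - v i := by
    intro i
    rcases (hv0 i).lt_or_eq with hpos | hzero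
    · have hle := key i hpos
      rw [abs_of_nonpos (by linarith), abs_of_pos (by linarith)]; ring
    · rw [← hzero]; simp
  have hveq : ∑ i, |v i - w i| = ∑ i, |w i| - 1 := by
    rw [Finset.sum_congr rfl (fun i _ => habs i), Finset.sum_sub_distrib, hv1]
  refine ⟨?_, hveq, ?_⟩
  · intro u hu0 hu1
    rw [hveq]
    have : ∀ i, |w i| - u i ≤ |u i - w i| := by
      intro i
      have := abs_sub_abs_le_abs_sub (w i) (u i)
      rw [abs_of_nonneg (hu0 i)] at this
      rw [abs_sub_comm]; linarith
    calc ∑ i, |w i| - 1 = ∑ i, (|w i| - u i) := by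
          rw [Finset.sum_sub_distrib, hu1]
      _ ≤ ∑ i, |u i - w i| := Finset.sum_le_sum (fun i _ => this i)
  · intro hw0
    have hwabs : ∑ i, |w i| = 1 := by
      rw [Finset.sum_congr rfl (fun i _ => abs_of_nonneg (hw0 i)), hw]
    have h0 : ∑ i, |v i - w i| = 0 := by rw [hveq, hwabs]; ring
    refine ⟨h0, funext fun i => ?_⟩
    have := (Finset.sum_eq_zero_iff_of_nonneg
      (fun i _ => abs_nonneg (v i - w i))).mp h0 i (Finset.mem_univ i)
    have := abs_eq_zero.mp this
    linarith
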